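/- For every integer N ≥ 2, the function S(r) = -1 + 2r + r^2 + 2r^N - 2r^{1+N} is strictly increasing on (0, 1/2), satisfies S(0) = -1 < 0 and S(1/2) = 1/4 + 1/2^N > 0, and hence has a unique root in (0, 1/2). -/

import Mathlib

private lemma S_hasDerivAt (N : ℕ) (hN : 2 ≤ N) (r : ℝ) :
    HasDerivAt (fun r : ℝ => -1 + 2*r + r^2 + 2*r^N - 2*r^(1+N))
      (2 + 2*r + 2*N*r^(N-1) - 2*(1+N)*r^N) r := by
  have h1 : HasDerivAt (fun r : ℝ => r^N) ((N:ℝ)*r^(N-1)) r := hasDerivAt_pow N r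
  have h2 : HasDerivAt (fun r : ℝ => r^(1+N)) (((1+N:ℕ):ℝ)*r^(1+N-1)) r := hasDerivAt_pow (1+N) r
  have h3 : HasDerivAt (fun r : ℝ => r^2) ((2:ℕ)*r^(2-1)) r := hasDerivAt_pow 2 r
  have h := ((((hasDerivAt_const r (-1:ℝ)).add ((hasDerivAt_id r).const_mul 2)).add h3).add
    (h1.const_mul 2)).sub (h2.const_mul 2)
  refine h.congr_deriv ?_
  have : 1 + N - 1 = N := by omega
  rw [this]
  push_cast
  ring

private lemma S_deriv_pos (N : ℕ) (hN : 2 ≤ N) {r : ℝ} (hr : r ∈ Set.Ioo (0:ℝ) (1/2)) :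
    0 < 2 + 2*r + 2*N*r^(N-1) - 2*(1+N)*r^N := by
  obtain ⟨hr0, hr2⟩ := hr
  have hp : (0:ℝ) < r^(N-1) := pow_pos hr0 _
  have hpow : r^N = r * r^(N-1) := by
    rw [← pow_succ']
    congr 1
    omega
  have hN' : (2:ℝ) ≤ (N:ℝ) := by exact_mod_cast hN
  have hpos : 0 < (N:ℝ) - (1+N)*r := by nlinarith
  nlinarith [mul_pos hp hpos]

theorem S_strictMono_and_unique_root (N : ℕ) (hN : 2 ≤ N) :
    StrictMonoOn (fun r : ℝ => -1 + 2*r + r^2 + 2*r^N - 2*r^(1+N)) (Set.Ioo (0 : ℝ) (1/2)) ∧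
    (-1 + 2*(0:ℝ) + (0:ℝ)^2 + 2*(0:ℝ)^N - 2*(0:ℝ)^(1+N) = -1) ∧ (-1 : ℝ) < 0 ∧
    (-1 + 2*((1:ℝ)/2) + ((1:ℝ)/2)^2 + 2*((1:ℝ)/2)^N - 2*((1:ℝ)/2)^(1+N) = 1/4 + 1/2^N) ∧
    (0 : ℝ) < 1/4 + 1/2^N ∧
    (∃! r : ℝ, r ∈ Set.Ioo (0 : ℝ) (1/2) ∧ -1 + 2*r + r^2 + 2*r^N - 2*r^(1+N) = 0) := by
  set f : ℝ → ℝ := fun r => -1 + 2*r + r^2 + 2*r^N - 2*r^(1+N) with hf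
  have hcont : Continuous f := by fun_prop
  have hmono : StrictMonoOn f (Set.Ioo (0 : ℝ) (1/2)) := by
    apply strictMonoOn_of_deriv_pos (convex_Ioo _ _) hcont.continuousOn
    intro x hx
    rw [interior_Ioo] at hx
    rw [(S_hasDerivAt N hN x).deriv]
    exact S_deriv_pos N hN hx
  have hN0 : N ≠ 0 := by omega
  have hf0 : f 0 = -1 := by
    simp [hf, zero_pow hN0]
  have hfh : f (1/2) = 1/4 + 1/2^N := by
    have h1 : ((1:ℝ)/2)^(1+N) = (1/2) * (1/2)^N := by rw [pow_add]; ring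
    have h2 : ((1:ℝ)/2)^N = 1/2^N := by rw [div_pow]; norm_num
    simp only [hf, h1, h2]
    ring
  have hpos : (0:ℝ) < 1/4 + 1/2^N := by positivity
  refine ⟨hmono, hf0, by norm_num, hfh, hpos, ?_⟩
  have hIVT := intermediate_value_Ioo (by norm_num : (0:ℝ) ≤ 1/2) hcont.continuousOn
  have h0mem : (0:ℝ) ∈ Set.Ioo (f 0) (f (1/2)) := by
    rw [hf0, hfh]; constructor <;> [norm_num; linarith]
  obtain ⟨r, hrmem, hr0⟩ := hIVT h0mem
  refine ⟨r, ⟨hrmem, hr0⟩, ?_⟩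
  rintro y ⟨hymem, hy0⟩
  exact hmono.injOn hymem hrmem ((show f y = 0 from hy0).trans hr0.symm)
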